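/- Let j ≥ 2 and let f : ∂Q^j → N be a map from the boundary of the unit cube Q^j = [-1,1]^j to a metric space N. Define F : Q^j \ {0} → N by F(x) = f(x/|x|_∞). Then for every x ∈ Q^j \ {0}, the Lipschitz number satisfies |x| · Lip F(x) ≤ j · sup_{y ∈ ∂Q^j} Lip f(y), where Lip g(x) = limsup_{y→x} d(g(y), g(x))/|y - x|. -/

import Mathlib

open Filter

open scoped ENNReal

/-- The supremum norm on `ℝ^j` (via the identification of `EuclideanSpace` with the Pi type). -/
noncomputable def supNorm {j : ℕ} (x : EuclideanSpace ℝ (Fin j)) : ℝ :=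
  ‖(WithLp.equiv 2 (Fin j → ℝ)) x‖

/-- The Lipschitz number `Lip f (x)` of `f` at `x` relative to the set `s`:
`limsup_{y → x, y ∈ s \ {x}} d(f y, f x) / d(y, x)` (valued in `[0,∞]`, equal to `0`
at isolated points since the limsup along the bottom filter is `⊥ = 0`). -/
noncomputable def lipNumOn {E N : Type*} [PseudoEMetricSpace E] [PseudoEMetricSpace N]
    (f : E → N) (s : Set E) (x : E) : ℝ≥0∞ :=
  Filter.limsup (fun y => edist (f y) (f x) / edist y x) (nhdsWithin x (s \ {x}))

section Aux
variable {j : ℕ}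

namespace StmtAux
variable {j : ℕ}

lemma abs_coord_le_norm (x : EuclideanSpace ℝ (Fin j)) (i : Fin j) : |x i| ≤ ‖x‖ := by
  have h := abs_real_inner_le_norm (EuclideanSpace.single i (1:ℝ)) x
  simpa [EuclideanSpace.inner_single_left] using h

lemma abs_coord_le_supNorm (x : EuclideanSpace ℝ (Fin j)) (i : Fin j) : |x i| ≤ supNorm x := by
  have h := norm_le_pi_norm ((WithLp.equiv 2 (Fin j → ℝ)) x) i
  simpa [supNorm] using h

lemma supNorm_pos {x : EuclideanSpace ℝ (Fin j)} (hx : x ≠ 0) : 0 < supNorm x := by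
  rw [supNorm]
  simpa [norm_pos_iff] using hx

lemma supNorm_smul (c : ℝ) (x : EuclideanSpace ℝ (Fin j)) : supNorm (c • x) = |c| * supNorm x := by
  simp [supNorm, norm_smul]

lemma continuous_supNorm : Continuous (supNorm (j := j)) :=
  continuous_norm.comp (PiLp.continuous_ofLp 2 (fun _ : Fin j => ℝ))

lemma exists_supNorm_eq (hj0 : 0 < j) (x : EuclideanSpace ℝ (Fin j)) :
    ∃ i, supNorm x = |x i| := by
  haveI : Nonempty (Fin j) := Fin.pos_iff_nonempty.1 hj0
  obtain ⟨i, -, hi⟩ := Finset.exists_mem_eq_sup (Finset.univ : Finset (Fin j)) Finset.univ_nonempty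
      (fun i => ‖x i‖₊)
  refine ⟨i, ?_⟩
  rw [supNorm, Pi.norm_def]
  show ((Finset.univ.sup fun b => ‖x b‖₊ : NNReal) : ℝ) = |x i|
  rw [hi]
  simp

lemma norm_sq_le_supNorm (x : EuclideanSpace ℝ (Fin j)) :
    ‖x‖ ^ 2 ≤ (j : ℝ) * supNorm x ^ 2 := by
  have h1 : ‖x‖ ^ 2 = ∑ i, x i ^ 2 := by
    rw [EuclideanSpace.norm_eq, Real.sq_sqrt (by positivity)]
    simp [sq_abs]
  rw [h1]
  have h2 : ∀ i : Fin j, x i ^ 2 ≤ supNorm x ^ 2 := fun i => by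
    have h := abs_coord_le_supNorm x i
    nlinarith [abs_nonneg (x i), sq_abs (x i)]
  calc ∑ i, x i ^ 2 ≤ ∑ _i : Fin j, supNorm x ^ 2 := Finset.sum_le_sum (fun i _ => h2 i)
    _ = (j : ℝ) * supNorm x ^ 2 := by simp [Finset.sum_const, Finset.card_univ, nsmul_eq_mul]

end StmtAux

namespace StmtAux

lemma exists_delta (hj0 : 0 < j) (x : EuclideanSpace ℝ (Fin j)) (hx : x ≠ 0) :
    ∃ ρ : ℝ, 0 < ρ ∧ 2 * ρ ≤ supNorm x ∧ ∀ h : EuclideanSpace ℝ (Fin j), ‖h‖ < ρ →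
      ∃ i : Fin j, x i ^ 2 = supNorm x ^ 2 ∧
        supNorm (x + h) = supNorm x + (x i / supNorm x) * h i := by
  haveI : Nonempty (Fin j) := Fin.pos_iff_nonempty.1 hj0
  set m := supNorm x with hmdef
  have hm : 0 < m := supNorm_pos hx
  set S : Finset (Fin j) := Finset.univ.filter (fun k => |x k| < m) with hSdef
  set g : ℝ := if hS : S.Nonempty then m - S.sup' hS (fun k => |x k|) else m with hgdef
  have hg : 0 < g := by
    rw [hgdef]
    split_ifs with hS
    · have hlt : S.sup' hS (fun k => |x k|) < m :=
        (Finset.sup'_lt_iff hS).2 (fun k hk => (Finset.mem_filter.1 hk).2)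
      linarith
    · exact hm
  refine ⟨min g m / 2, by positivity, ?_, ?_⟩
  · have := min_le_right g m; linarith
  intro h hh
  have hρg : 2 * (min g m / 2) ≤ g := by have := min_le_left g m; linarith
  have hρm : 2 * (min g m / 2) ≤ m := by have := min_le_right g m; linarith
  set ρ := min g m / 2 with hρdef
  have hρ : 0 < ρ := by positivity
  have coords : ∀ k, |h k| < ρ := fun k => lt_of_le_of_lt (abs_coord_le_norm h k) hh
  obtain ⟨i, hi⟩ := exists_supNorm_eq hj0 (x + h)
  have hixh : (x + h) i = x i + h i := rfl
  rw [hixh] at hi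
  obtain ⟨k₀, hk₀⟩ := exists_supNorm_eq hj0 x
  have hlow : m - ρ < supNorm (x + h) := by
    have h1 : |x k₀ + h k₀| ≤ supNorm (x + h) := by
      have := abs_coord_le_supNorm (x + h) k₀
      rwa [show (x + h) k₀ = x k₀ + h k₀ from rfl] at this
    have h2 : |x k₀| ≤ |x k₀ + h k₀| + |h k₀| := by
      have := abs_add_le (x k₀ + h k₀) (-(h k₀))
      simpa using this
    have h3 := coords k₀
    have hk₀' : m = |x k₀| := hmdef.trans hk₀
    linarith
  have him : |x i| = m := by
    by_contra hne
    have hilt : |x i| < m := lt_of_le_of_ne (abs_coord_le_supNorm x i) hne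
    have hiS : i ∈ S := Finset.mem_filter.2 ⟨Finset.mem_univ _, hilt⟩
    have hS : S.Nonempty := ⟨i, hiS⟩
    have hsup : |x i| ≤ S.sup' hS (fun k => |x k|) := Finset.le_sup' (fun k => |x k|) hiS
    have hgle : g ≤ m - |x i| := by
      rw [hgdef, dif_pos hS]; linarith
    have h3 : |x i + h i| ≤ |x i| + |h i| := abs_add_le _ _
    have := coords i
    linarith [hlow, hi ▸ le_refl (supNorm (x + h))]
  have hxi2 : x i ^ 2 = m ^ 2 := by rw [← sq_abs (x i), him]
  refine ⟨i, hxi2, ?_⟩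
  have habs1 : |x i / m| = 1 := by rw [abs_div, him, abs_of_pos hm, div_self hm.ne']
  have hsm : (x i / m) * x i = m := by
    rw [div_mul_eq_mul_div, ← sq, hxi2, sq]
    exact mul_div_cancel_right₀ m hm.ne'
  have hpos : 0 < m + (x i / m) * h i := by
    have habs2 : |(x i / m) * h i| = |h i| := by rw [abs_mul, habs1, one_mul]
    have h4 := neg_abs_le ((x i / m) * h i)
    have := coords i
    rw [habs2] at h4
    linarith
  calc supNorm (x + h) = |x i + h i| := hi
    _ = |x i / m| * |x i + h i| := by rw [habs1, one_mul]
    _ = |(x i / m) * (x i + h i)| := (abs_mul _ _).symm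
    _ = |m + (x i / m) * h i| := by rw [mul_add, hsm]
    _ = m + (x i / m) * h i := abs_of_pos hpos

end StmtAux

namespace StmtAux

open scoped RealInnerProductSpace in
lemma key_ineq (u h : EuclideanSpace ℝ (Fin j)) (i : Fin j) (hu : u i ^ 2 = 1) :
    ‖h - (u i * h i) • u‖ ≤ ‖u‖ * ‖h‖ := by
  set e : EuclideanSpace ℝ (Fin j) := EuclideanSpace.single i (1:ℝ) with he
  set w : EuclideanSpace ℝ (Fin j) := u - u i • e with hw
  set h' : EuclideanSpace ℝ (Fin j) := h - h i • e with hh'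
  have hene : ‖e‖ = 1 := by simp [he]
  have hue : ⟪u, e⟫ = u i := by simp [he, EuclideanSpace.inner_single_right]
  have hhe : ⟪h, e⟫ = h i := by simp [he, EuclideanSpace.inner_single_right]
  have hwnorm : ‖w‖ ^ 2 = ‖u‖ ^ 2 - 1 := by
    rw [hw, norm_sub_sq_real, real_inner_smul_right, norm_smul, hue]
    simp [hene]
    nlinarith [hu]
  have hhnorm : ‖h'‖ ^ 2 = ‖h‖ ^ 2 - h i ^ 2 := by
    rw [hh', norm_sub_sq_real, real_inner_smul_right, norm_smul, hhe]
    simp [hene]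
    ring
  have hee : ⟪e, e⟫ = (1:ℝ) := by rw [real_inner_self_eq_norm_sq, hene]; norm_num
  have heu : ⟪e, u⟫ = u i := by rw [real_inner_comm]; exact hue
  have hhu : ⟪h', w⟫ = ⟪h, u⟫ - h i * u i := by
    rw [hh', hw, inner_sub_left, inner_sub_right, inner_sub_right, real_inner_smul_left,
      real_inner_smul_right, real_inner_smul_left, real_inner_smul_right, hhe, heu, hee]
    ring
  have hcs : |⟪h', w⟫| ≤ ‖h'‖ * ‖w‖ := abs_real_inner_le_norm _ _
  have ht2 : ⟪h', w⟫ ^ 2 ≤ (‖h'‖ * ‖w‖) ^ 2 := by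
    rw [← sq_abs]
    exact pow_le_pow_left₀ (abs_nonneg _) hcs 2
  have hLHS : ‖h - (u i * h i) • u‖ ^ 2
      = ‖h‖ ^ 2 - 2 * (u i * h i) * ⟪h, u⟫ + (u i * h i) ^ 2 * ‖u‖ ^ 2 := by
    rw [norm_sub_sq_real, real_inner_smul_right, norm_smul, Real.norm_eq_abs, mul_pow, sq_abs]
    ring
  have hsq : ‖h - (u i * h i) • u‖ ^ 2 ≤ (‖u‖ * ‖h‖) ^ 2 := by
    have hu' : u i ^ 2 * h i ^ 2 = h i ^ 2 := by rw [hu, one_mul]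
    have hu'' : u i ^ 2 * h i ^ 2 * ‖u‖ ^ 2 = h i ^ 2 * ‖u‖ ^ 2 := by rw [hu, one_mul]
    have hWH : ‖w‖ ^ 2 * ‖h'‖ ^ 2 = (‖u‖ ^ 2 - 1) * (‖h‖ ^ 2 - h i ^ 2) := by
      rw [hwnorm, hhnorm]
    have hhu2 : u i * h i * ⟪h', w⟫ = u i * h i * ⟪h, u⟫ - u i ^ 2 * h i ^ 2 := by
      rw [hhu]; ring
    rw [hLHS, mul_pow]
    nlinarith [ht2, sq_nonneg (⟪h', w⟫ + u i * h i), hWH, hhu2, hu', hu'',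
      mul_pow ‖h'‖ ‖w‖ 2]
  have hfin := Real.sqrt_le_sqrt hsq
  rwa [Real.sqrt_sq (norm_nonneg _), Real.sqrt_sq (mul_nonneg (norm_nonneg _) (norm_nonneg _))] at hfin


lemma radial_est (hj0 : 0 < j) (x : EuclideanSpace ℝ (Fin j)) (hx : x ≠ 0) {ε : ℝ}
    (hε : 0 < ε) (hεm : ε < supNorm x) :
    ∃ ρ : ℝ, 0 < ρ ∧ ∀ y : EuclideanSpace ℝ (Fin j), ‖y - x‖ < ρ →
      ‖(supNorm y)⁻¹ • y - (supNorm x)⁻¹ • x‖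
        ≤ ‖x‖ / (supNorm x * (supNorm x - ε)) * ‖y - x‖ := by
  obtain ⟨ρ₀, hρ₀, hρ₀m, hB⟩ := exists_delta hj0 x hx
  set m := supNorm x with hmdef
  have hm : 0 < m := supNorm_pos hx
  refine ⟨min ρ₀ ε, by positivity, fun y hy => ?_⟩
  set h : EuclideanSpace ℝ (Fin j) := y - x with hhdef
  have hxy : y = x + h := by rw [hhdef]; abel
  have hhρ₀ : ‖h‖ < ρ₀ := lt_of_lt_of_le hy (min_le_left _ _)
  have hhε : ‖h‖ < ε := lt_of_lt_of_le hy (min_le_right _ _)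
  obtain ⟨i, hxi2, hδ⟩ := hB h hhρ₀
  set δ : ℝ := (x i / m) * h i with hδdef
  have him : |x i| = m := by
    have := abs_nonneg (x i)
    nlinarith [sq_abs (x i), hxi2]
  have habs1 : |x i / m| = 1 := by rw [abs_div, him, abs_of_pos hm, div_self hm.ne']
  have hδa : |δ| ≤ ‖h‖ := by
    rw [hδdef, abs_mul, habs1, one_mul]
    exact abs_coord_le_norm h i
  have hδε : |δ| < ε := lt_of_le_of_lt hδa hhε
  have hm' : supNorm y = m + δ := by rw [hxy]; exact hδ
  have hpos1 : 0 < m - ε := by linarith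
  have hpos2 : 0 < m + δ := by have := neg_abs_le δ; linarith
  have hu : (m⁻¹ • x : EuclideanSpace ℝ (Fin j)) i ^ 2 = 1 := by
    have : (m⁻¹ • x : EuclideanSpace ℝ (Fin j)) i = m⁻¹ * x i := rfl
    rw [this, mul_pow, hxi2, inv_pow]
    field_simp
  have hid : (supNorm y)⁻¹ • y - m⁻¹ • x = (m + δ)⁻¹ • (h - δ • (m⁻¹ • x)) := by
    rw [hm', hxy]
    match_scalars
    · field_simp
      ring
    · field_simp
  have hkey : ‖h - δ • (m⁻¹ • x)‖ ≤ ‖(m⁻¹ • x : EuclideanSpace ℝ (Fin j))‖ * ‖h‖ := by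
    have hki := key_ineq (m⁻¹ • x) h i hu
    have hcoord : (m⁻¹ • x : EuclideanSpace ℝ (Fin j)) i = m⁻¹ * x i := rfl
    rw [hcoord] at hki
    have : δ = m⁻¹ * x i * h i := by rw [hδdef]; ring
    rw [this]
    exact hki
  have hnux : ‖(m⁻¹ • x : EuclideanSpace ℝ (Fin j))‖ = ‖x‖ / m := by
    rw [norm_smul, Real.norm_eq_abs, abs_of_pos (inv_pos.2 hm), inv_mul_eq_div]
  rw [hid, norm_smul, Real.norm_eq_abs, abs_of_pos (inv_pos.2 hpos2)]
  have hfirst : (m + δ)⁻¹ * ‖h - δ • (m⁻¹ • x)‖ ≤ (m + δ)⁻¹ * (‖x‖ / m * ‖h‖) := by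
    apply mul_le_mul_of_nonneg_left _ (inv_pos.2 hpos2).le
    rw [← hnux]
    exact hkey
  have hsecond : (m + δ)⁻¹ * (‖x‖ / m * ‖h‖) ≤ (m - ε)⁻¹ * (‖x‖ / m * ‖h‖) := by
    apply mul_le_mul_of_nonneg_right
    · apply inv_anti₀ hpos1
      have := neg_abs_le δ
      linarith
    · positivity
  have heq : ‖x‖ / (m * (m - ε)) = (m - ε)⁻¹ * (‖x‖ / m) := by
    rw [← div_div, div_eq_mul_inv (‖x‖ / m), mul_comm]
  calc (m + δ)⁻¹ * ‖h - δ • (m⁻¹ • x)‖ ≤ (m + δ)⁻¹ * (‖x‖ / m * ‖h‖) := hfirst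
    _ ≤ (m - ε)⁻¹ * (‖x‖ / m * ‖h‖) := hsecond
    _ = ‖x‖ / (m * (m - ε)) * ‖h‖ := by rw [heq, mul_assoc]

end StmtAux


/-- Homogeneous extension: if `F x = f (x / ‖x‖_∞)` on the punctured cube, then
`|x| · Lip F (x) ≤ j · sup_{y ∈ ∂Q^j} Lip f (y)`. -/
theorem stmt0 {j : ℕ} (hj : 2 ≤ j) {N : Type*} [MetricSpace N]
    (f F : EuclideanSpace ℝ (Fin j) → N)
    (hF : ∀ x : EuclideanSpace ℝ (Fin j), x ≠ 0 → F x = f ((supNorm x)⁻¹ • x))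
    (x : EuclideanSpace ℝ (Fin j)) (hx0 : x ≠ 0) (hxQ : supNorm x ≤ 1) :
    ENNReal.ofReal ‖x‖ * lipNumOn F {y | supNorm y ≤ 1 ∧ y ≠ 0} x
      ≤ (j : ℝ≥0∞) *
        ⨆ y ∈ {y : EuclideanSpace ℝ (Fin j) | supNorm y = 1},
          lipNumOn f {z | supNorm z = 1} y := by
  have hj0 : 0 < j := by omega
  have hm : 0 < supNorm x := StmtAux.supNorm_pos hx0
  set m := supNorm x with hmdef
  set u : EuclideanSpace ℝ (Fin j) := m⁻¹ • x with hudef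
  have hum : supNorm u = 1 := by
    rw [hudef, StmtAux.supNorm_smul, abs_of_pos (inv_pos.2 hm), ← hmdef, inv_mul_cancel₀ hm.ne']
  set L := lipNumOn f {z | supNorm z = 1} u with hLdef
  have hLS : L ≤ ⨆ y ∈ {y : EuclideanSpace ℝ (Fin j) | supNorm y = 1},
      lipNumOn f {z | supNorm z = 1} y :=
    le_iSup₂ (f := fun y (_ : y ∈ {y : EuclideanSpace ℝ (Fin j) | supNorm y = 1}) =>
      lipNumOn f {z | supNorm z = 1} y) u hum
  by_cases hS : (⨆ y ∈ {y : EuclideanSpace ℝ (Fin j) | supNorm y = 1},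
      lipNumOn f {z | supNorm z = 1} y) = ⊤
  · rw [hS, ENNReal.mul_top (by exact_mod_cast (by omega : j ≠ 0))]
    exact le_top
  have hLt : L ≠ ⊤ := fun h => hS (top_le_iff.1 (h ▸ hLS))
  set l := nhdsWithin x ({y : EuclideanSpace ℝ (Fin j) | supNorm y ≤ 1 ∧ y ≠ 0} \ {x}) with hldef
  set G : EuclideanSpace ℝ (Fin j) → ℝ≥0∞ := fun z => edist (f z) (f u) / edist z u with hGdef
  set r : EuclideanSpace ℝ (Fin j) → EuclideanSpace ℝ (Fin j) :=
    fun y => (supNorm y)⁻¹ • y with hrdef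
  have hrx : r x = u := rfl
  have hFx : F x = f u := hF x hx0
  -- step 3 : limsup of G ∘ r along l is at most L
  have step3 : Filter.limsup (fun y => G (r y)) l ≤ L := by
    have htendsto : Tendsto r l (nhdsWithin u {z | supNorm z = 1}) := by
      rw [tendsto_nhdsWithin_iff]
      constructor
      · have hcont : ContinuousAt r x := by
          apply ContinuousAt.smul (f := fun y => (supNorm y)⁻¹) (g := id) _ continuousAt_id
          exact (StmtAux.continuous_supNorm.continuousAt).inv₀ hm.ne'
        have h1 := hcont.tendsto
        rw [hrx] at h1
        exact h1.mono_left nhdsWithin_le_nhds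
      · filter_upwards [eventually_mem_nhdsWithin] with y hy
        have hy0 : y ≠ 0 := hy.1.2
        have hy' : 0 < supNorm y := StmtAux.supNorm_pos hy0
        show supNorm (r y) = 1
        rw [hrdef]
        simp only
        rw [StmtAux.supNorm_smul, abs_of_pos (inv_pos.2 hy'), inv_mul_cancel₀ hy'.ne']
      done
    have e1 : Filter.limsup (fun y => G (r y)) l = Filter.limsup G (Filter.map r l) := by
      unfold Filter.limsup
      rw [Filter.map_map]
      rfl
    rw [e1]
    have e3 : nhdsWithin u {z : EuclideanSpace ℝ (Fin j) | supNorm z = 1}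
        ≤ nhdsWithin u ({z : EuclideanSpace ℝ (Fin j) | supNorm z = 1} \ {u}) ⊔ pure u := by
      have hsub : {z : EuclideanSpace ℝ (Fin j) | supNorm z = 1}
          ⊆ ({z : EuclideanSpace ℝ (Fin j) | supNorm z = 1} \ {u}) ∪ {u} := by
        intro z hz
        by_cases hzu : z = u
        · exact Or.inr hzu
        · exact Or.inl ⟨hz, hzu⟩
      calc nhdsWithin u {z : EuclideanSpace ℝ (Fin j) | supNorm z = 1}
          ≤ nhdsWithin u (({z : EuclideanSpace ℝ (Fin j) | supNorm z = 1} \ {u}) ∪ {u}) :=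
            nhdsWithin_mono u hsub
        _ = nhdsWithin u ({z : EuclideanSpace ℝ (Fin j) | supNorm z = 1} \ {u})
            ⊔ nhdsWithin u {u} := nhdsWithin_union _ _ _
        _ = _ := by rw [nhdsWithin_singleton]
    have hGu : Filter.limsup G (pure u) ≤ 0 := by
      apply Filter.limsup_le_of_le (by isBoundedDefault)
      simp [hGdef]
    calc Filter.limsup G (Filter.map r l)
        ≤ Filter.limsup G (nhdsWithin u ({z : EuclideanSpace ℝ (Fin j) | supNorm z = 1} \ {u})
            ⊔ pure u) := Filter.limsup_le_limsup_of_le (le_trans htendsto e3)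
      _ = Filter.limsup G (nhdsWithin u ({z : EuclideanSpace ℝ (Fin j) | supNorm z = 1} \ {u}))
          ⊔ Filter.limsup G (pure u) := Filter.limsup_sup_filter
      _ ≤ L := sup_le (le_of_eq rfl) (le_trans hGu (zero_le (a := L)))
  -- main estimate for each small ε
  have main : ∀ ε ∈ Set.Ioo (0:ℝ) m,
      ENNReal.ofReal ‖x‖ * lipNumOn F {y | supNorm y ≤ 1 ∧ y ≠ 0} x
        ≤ ENNReal.ofReal (‖x‖ * (‖x‖ / (m * (m - ε)))) * L := by
    rintro ε ⟨hε, hεm⟩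
    obtain ⟨ρ, hρ, hest⟩ := StmtAux.radial_est hj0 x hx0 hε hεm
    set c : ℝ := ‖x‖ / (m * (m - ε)) with hcdef
    have hxpos : 0 < ‖x‖ := norm_pos_iff.2 hx0
    have hc : 0 < c := by
      rw [hcdef]
      have : 0 < m - ε := by linarith
      positivity
    have ev : ∀ᶠ y in l, edist (F y) (F x) / edist y x ≤ ENNReal.ofReal c * G (r y) := by
      have h1 : ∀ᶠ y in l, y ∈ {y : EuclideanSpace ℝ (Fin j) | supNorm y ≤ 1 ∧ y ≠ 0} \ {x} :=
        eventually_mem_nhdsWithin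
      have h2 : ∀ᶠ y in l, dist y x < ρ :=
        Filter.eventually_of_mem (mem_nhdsWithin_of_mem_nhds (Metric.ball_mem_nhds x hρ))
          (fun y hy => Metric.mem_ball.1 hy)
      filter_upwards [h1, h2] with y hy hyρ
      have hy0 : y ≠ 0 := hy.1.2
      have hyx : y ≠ x := hy.2
      have hFy : F y = f (r y) := hF y hy0
      have hest' : ‖r y - u‖ ≤ c * ‖y - x‖ := hest y (by rwa [← dist_eq_norm])
      by_cases hru : r y = u
      · rw [hFy, hFx, hru]
        simp
      · have hD0 : edist y x ≠ 0 := (edist_pos.2 hyx).ne'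
        have hDt : edist y x ≠ ⊤ := edist_ne_top _ _
        have hB0 : edist (r y) u ≠ 0 := (edist_pos.2 hru).ne'
        have hBt : edist (r y) u ≠ ⊤ := edist_ne_top _ _
        have hBD : edist (r y) u ≤ ENNReal.ofReal c * edist y x := by
          rw [edist_dist, edist_dist, ← ENNReal.ofReal_mul hc.le]
          apply ENNReal.ofReal_le_ofReal
          rw [dist_eq_norm, dist_eq_norm]
          exact hest'
        rw [hFy, hFx, ENNReal.div_le_iff hD0 hDt]
        calc edist (f (r y)) (f u)
            = edist (f (r y)) (f u) / edist (r y) u * edist (r y) u :=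
              (ENNReal.div_mul_cancel hB0 hBt).symm
          _ ≤ edist (f (r y)) (f u) / edist (r y) u * (ENNReal.ofReal c * edist y x) :=
              mul_le_mul_right hBD _
          _ = ENNReal.ofReal c * G (r y) * edist y x := by rw [hGdef]; ring
    have step1 : lipNumOn F {y | supNorm y ≤ 1 ∧ y ≠ 0} x
        ≤ ENNReal.ofReal c * Filter.limsup (fun y => G (r y)) l := by
      calc lipNumOn F {y | supNorm y ≤ 1 ∧ y ≠ 0} x
          = Filter.limsup (fun y => edist (F y) (F x) / edist y x) l := rfl
        _ ≤ Filter.limsup (fun y => ENNReal.ofReal c * G (r y)) l := Filter.limsup_le_limsup ev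
        _ = ENNReal.ofReal c * Filter.limsup (fun y => G (r y)) l :=
            ENNReal.limsup_const_mul_of_ne_top ENNReal.ofReal_ne_top
    calc ENNReal.ofReal ‖x‖ * lipNumOn F {y | supNorm y ≤ 1 ∧ y ≠ 0} x
        ≤ ENNReal.ofReal ‖x‖ * (ENNReal.ofReal c * L) :=
          mul_le_mul_right (step1.trans (mul_le_mul_right step3 _)) _
      _ = ENNReal.ofReal (‖x‖ * c) * L := by
          rw [ENNReal.ofReal_mul (norm_nonneg x), mul_assoc]
  -- pass to the limit ε → 0⁺
  have htend : Tendsto (fun ε : ℝ => ENNReal.ofReal (‖x‖ * (‖x‖ / (m * (m - ε)))) * L)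
      (nhdsWithin 0 (Set.Ioi 0)) (nhds (ENNReal.ofReal (‖x‖ * (‖x‖ / (m * m))) * L)) := by
    apply ENNReal.Tendsto.mul_const _ (Or.inr hLt)
    have hcont : ContinuousAt (fun ε : ℝ => ‖x‖ * (‖x‖ / (m * (m - ε)))) 0 := by
      apply ContinuousAt.mul continuousAt_const
      apply ContinuousAt.div continuousAt_const
      · exact (continuous_const.mul (continuous_const.sub continuous_id)).continuousAt
      · simp [hm.ne']
    have h1 := hcont.tendsto
    simp only [sub_zero] at h1
    exact (ENNReal.continuous_ofReal.tendsto _).comp (h1.mono_left nhdsWithin_le_nhds)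
  have hle : ENNReal.ofReal ‖x‖ * lipNumOn F {y | supNorm y ≤ 1 ∧ y ≠ 0} x
      ≤ ENNReal.ofReal (‖x‖ * (‖x‖ / (m * m))) * L := by
    apply ge_of_tendsto htend
    filter_upwards [Ioo_mem_nhdsGT_of_mem (Set.mem_Ico.2 ⟨le_refl (0:ℝ), hm⟩)] with ε hε
    exact main ε hε
  refine hle.trans ?_
  have hfrac : ENNReal.ofReal (‖x‖ * (‖x‖ / (m * m))) ≤ (j : ℝ≥0∞) := by
    rw [← ENNReal.ofReal_natCast j]
    apply ENNReal.ofReal_le_ofReal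
    rw [mul_div_assoc']
    rw [div_le_iff₀ (by positivity)]
    have := StmtAux.norm_sq_le_supNorm x
    nlinarith [this]
  exact mul_le_mul' hfrac hLS
end Aux
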